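/- Let M be a finite multiset on O, S_M = ⋃_{o∈O} {o_1,...,o_{m_M(o)}} the set of indexed copies, and for M' ⊆ M let ss(M') = {S ⊆ S_M : |S ∩ {o_1,...,o_{m_M(o)}}| = m_{M'}(o) for every o}. Define the relation >_i on subsets of S_M as the transitive closure of {(S_1, S_2) : (S_1 ∪ S_2) \ (S_1 ∩ S_2) = {o_i, o_j} with o_i ∈ S_1, o_j ∈ S_2, j = i+1}. Then for every M' ⊆ M, the set ⋃_{o} {o_1,...,o_{m_{M'}(o)}} is the unique maximal element of ss(M') with respect to >_i. -/
import Mathlib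


variable {O : Type*} [DecidableEq O]

/-- A strict partial order: irreflexive, asymmetric, transitive. -/
def IsPrefRel {α : Type*} (r : α → α → Prop) : Prop :=
  (∀ a, ¬ r a a) ∧ (∀ a b, r a b → ¬ r b a) ∧ (∀ a b c, r a b → r b c → r a c)

/-- A `CᵐI`-statement `M⁺, M⁻ : M₁ ▷ M₂` on the finite multiset `M`. -/
structure CmIStmt (O : Type*) [DecidableEq O] (M : Multiset O) where
  mp : Multiset O
  mm : Multiset O
  m1 : Multiset O
  m2 : Multiset O
  hp : mp ≤ M
  hm : mm ≤ M - mp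
  h1 : m1 ≤ M - (mp + mm)
  h2 : m2 ≤ M - (mp + mm)
  n1 : m1 ≠ 0
  n2 : m2 ≠ 0
  d12 : m1 ∩ m2 = 0

/-- `r` satisfies a `CᵐI`-statement. -/
def SatCmStmt (M : Multiset O) (r : Multiset O → Multiset O → Prop)
    (c : CmIStmt O M) : Prop :=
  ∀ M' ≤ M - (c.mp + c.mm + c.m1 + c.m2),
    r (M' + c.mp + c.m1) (M' + c.mp + c.m2)

/-- Monotonicity on sub-multisets of `M`. -/
def MonotonicOn (M : Multiset O) (r : Multiset O → Multiset O → Prop) : Prop :=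
  ∀ a b : Multiset O, a ≤ M → b < a → r a b

/-- Strict-partial-order conditions restricted to sub-multisets of `M`. -/
def IsPrefRelOn (M : Multiset O) (r : Multiset O → Multiset O → Prop) : Prop :=
  (∀ a, a ≤ M → ¬ r a a) ∧
  (∀ a b, a ≤ M → b ≤ M → r a b → ¬ r b a) ∧
  (∀ a b c, a ≤ M → b ≤ M → c ≤ M → r a b → r b c → r a c)

/-- `r` satisfies a `CᵐI`-net. -/
def SatCmNet (M : Multiset O) (r : Multiset O → Multiset O → Prop)
    (N : Set (CmIStmt O M)) : Prop :=
  MonotonicOn M r ∧ ∀ c ∈ N, SatCmStmt M r c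

/-- Satisfiability of a `CᵐI`-net. -/
def CmSatisfiable (M : Multiset O) (N : Set (CmIStmt O M)) : Prop :=
  ∃ r : Multiset O → Multiset O → Prop, IsPrefRelOn M r ∧ SatCmNet M r N

/-- CI-flip with respect to a single `CᵐI`-statement. -/
def CmFlipStmt (M : Multiset O) (c : CmIStmt O M) (a b : Multiset O) : Prop :=
  ∃ M' ≤ M - (c.mp + c.mm + c.m1 + c.m2),
    a = M' + c.mp + c.m1 ∧ b = M' + c.mp + c.m2

/-- Worsening flip for a `CᵐI`-net: a `⊃`-flip within `M` or a CI-flip. -/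
def CmWFlip (M : Multiset O) (N : Set (CmIStmt O M)) (a b : Multiset O) : Prop :=
  (b < a ∧ a ≤ M) ∨ ∃ c ∈ N, CmFlipStmt M c a b

/-- The intersection of all preference relations satisfying `N`. -/
def CmInduced (M : Multiset O) (N : Set (CmIStmt O M)) (a b : Multiset O) : Prop :=
  ∀ r : Multiset O → Multiset O → Prop, IsPrefRelOn M r ∧ SatCmNet M r N → r a b

variable [Fintype O]

/-- The set of indexed copies `{(o, i) : 1 ≤ i ≤ m_M(o)}`. -/
def SMset (M : Multiset O) : Finset (O × ℕ) :=
  Finset.univ.biUnion fun o : O => (Finset.Icc 1 (M.count o)).image fun i => (o, i)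

/-- The block of indexed copies `{o_a, ..., o_b}` of `o`. -/
def block (o : O) (a b : ℕ) : Finset (O × ℕ) :=
  (Finset.Icc a b).image fun i => (o, i)

/-- `S ∈ ss(M')`: `S ⊆ S_M` and for every `o`, `S` has exactly `m_{M'}(o)`
indexed copies of `o`. -/
def InSS (M M' : Multiset O) (S : Finset (O × ℕ)) : Prop :=
  S ⊆ SMset M ∧ ∀ o : O, (S.filter fun p => p.1 = o).card = M'.count o

/-- `overline{M'} = ⋃_o {o_1, ..., o_{m_{M'}(o)}}`. -/
def ovl (M' : Multiset O) : Finset (O × ℕ) :=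
  Finset.univ.biUnion fun o : O => block o 1 (M'.count o)

/-- One step of the index-shifting order `>_i` on subsets of `S_M`: the
symmetric difference is `{o_i, o_{i+1}}` with `o_i ∈ S₁`, `o_{i+1} ∈ S₂`. -/
def IStep (M : Multiset O) (S1 S2 : Finset (O × ℕ)) : Prop :=
  S1 ⊆ SMset M ∧ S2 ⊆ SMset M ∧
    ∃ (o : O) (i : ℕ), (S1 ∪ S2) \ (S1 ∩ S2) = {(o, i), (o, i + 1)} ∧
      (o, i) ∈ S1 ∧ (o, i + 1) ∈ S2


namespace Stmt14Aux
open Finset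

set_option linter.unusedSectionVars false

lemma down_closed (T : Finset ℕ) (h0 : 0 ∉ T)
    (hc : ∀ i, 1 ≤ i → i + 1 ∈ T → i ∈ T) : T = Finset.Icc 1 T.card := by
  have key : ∀ j, j + 1 ∈ T → Finset.Icc 1 (j+1) ⊆ T := by
    intro j
    induction j with
    | zero => intro h1 x hx; simp at hx; subst hx; simpa using h1
    | succ j ih =>
      intro h2 x hx
      have hj1 : j + 1 ∈ T := hc (j+1) (by omega) h2
      have hss := ih hj1
      simp only [Finset.mem_Icc] at hx
      rcases Nat.lt_or_ge x (j+2) with hl | hl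
      · exact hss (by simp [Finset.mem_Icc]; omega)
      · have : x = j + 2 := by omega
        simpa [this] using h2
  rcases T.eq_empty_or_nonempty with rfl | hne
  · simp
  · set m := T.max' hne with hm
    have hmT : m ∈ T := T.max'_mem hne
    have hm1 : 1 ≤ m := by
      rcases Nat.eq_zero_or_pos m with h | h
      · exact absurd (h ▸ hmT) h0
      · exact h
    have hsub : Finset.Icc 1 m ⊆ T := by
      have := key (m - 1)
      rw [Nat.sub_add_cancel hm1] at this
      exact this hmT
    have hsub2 : T ⊆ Finset.Icc 1 m := by
      intro x hx
      simp only [Finset.mem_Icc]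
      refine ⟨?_, T.le_max' x hx⟩
      rcases Nat.eq_zero_or_pos x with h | h
      · exact absurd (h ▸ hx) h0
      · exact h
    have hT : T = Finset.Icc 1 m := le_antisymm hsub2 hsub
    rw [hT, Nat.card_Icc]
    congr 1

lemma sdiff_pair {α : Type*} [DecidableEq α] (S : Finset α) (a b : α) (hab : a ≠ b)
    (ha : a ∉ S) (hb : b ∈ S) :
    ((insert a (S.erase b)) ∪ S) \ ((insert a (S.erase b)) ∩ S) = {a, b} := by
  ext p
  simp only [Finset.mem_sdiff, Finset.mem_union, Finset.mem_inter, Finset.mem_insert,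
    Finset.mem_erase, Finset.mem_singleton]
  by_cases e1 : p = a <;> by_cases e2 : p = b <;> simp_all <;> tauto

lemma set_eq_pair {α : Type*} [DecidableEq α] (S1 S2 : Finset α) (a b : α) (hab : a ≠ b)
    (ha1 : a ∈ S1) (hb2 : b ∈ S2)
    (key : ∀ p, (p ∈ S1 ∪ S2 ∧ p ∉ S1 ∩ S2) ↔ (p = a ∨ p = b)) :
    S2 = insert b (S1.erase a) := by
  ext p
  have hp := key p
  clear key
  simp only [Finset.mem_union, Finset.mem_inter] at hp
  simp only [Finset.mem_insert, Finset.mem_erase]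
  by_cases e1 : p = a <;> by_cases e2 : p = b <;> simp_all <;> tauto

lemma mem_SMset {M : Multiset O} {o : O} {i : ℕ} :
    (o, i) ∈ SMset M ↔ 1 ≤ i ∧ i ≤ M.count o := by
  simp [SMset]

lemma mem_ovl {M' : Multiset O} {o : O} {i : ℕ} :
    (o, i) ∈ ovl M' ↔ 1 ≤ i ∧ i ≤ M'.count o := by
  simp [ovl, block]

/-- Potential: sum of indices. -/
def phi (S : Finset (O × ℕ)) : ℕ := ∑ p ∈ S, p.2

lemma phi_step {M : Multiset O} {S1 S2 : Finset (O × ℕ)} (h : IStep M S1 S2) :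
    phi S2 = phi S1 + 1 := by
  obtain ⟨-, -, o, i, hd, h1, h2⟩ := h
  have hne : ((o, i) : O × ℕ) ≠ (o, i+1) := by simp
  have key : ∀ p : O × ℕ, (p ∈ S1 ∪ S2 ∧ p ∉ S1 ∩ S2) ↔ (p = (o,i) ∨ p = (o,i+1)) := by
    intro p; rw [← Finset.mem_sdiff, hd]; simp
  have hi1 : (o, i+1) ∉ S1 := by
    intro hm
    have := (key (o,i+1)).mpr (Or.inr rfl)
    simp [h2, hm] at this
  have hS2 : S2 = insert (o, i+1) (S1.erase (o, i)) := set_eq_pair S1 S2 _ _ hne h1 h2 key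
  have hnotmem : (o, i+1) ∉ S1.erase (o, i) := fun hm => hi1 (Finset.mem_of_mem_erase hm)
  have e2 : phi S2 = (i+1) + ∑ p ∈ S1.erase (o,i), p.2 := by
    rw [hS2, phi, Finset.sum_insert hnotmem]
  have e1 : i + ∑ p ∈ S1.erase (o,i), p.2 = phi S1 :=
    Finset.add_sum_erase S1 Prod.snd h1
  omega

lemma phi_lt {M : Multiset O} {a b : Finset (O × ℕ)}
    (h : Relation.TransGen (IStep M) a b) : phi a < phi b := by
  induction h with
  | single h => rw [phi_step h]; omega
  | tail _ h ih => have := phi_step h; omega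

lemma ovl_in_ss {M M' : Multiset O} (h : M' ≤ M) : InSS M M' (ovl M') := by
  constructor
  · intro p hp
    obtain ⟨o, j⟩ := p
    rw [mem_ovl] at hp
    rw [mem_SMset]
    exact ⟨hp.1, le_trans hp.2 (Multiset.le_iff_count.mp h o)⟩
  · intro o
    have hf : (ovl M').filter (fun p => p.1 = o) = block o 1 (M'.count o) := by
      ext ⟨o', j⟩
      simp only [Finset.mem_filter]
      constructor
      · rintro ⟨hm, rfl⟩
        rw [mem_ovl] at hm
        simp only [block, Finset.mem_image, Finset.mem_Icc]
        exact ⟨j, ⟨hm.1, hm.2⟩, rfl⟩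
      · intro hm
        simp only [block, Finset.mem_image, Finset.mem_Icc] at hm
        obtain ⟨k, hk, hkeq⟩ := hm
        obtain ⟨rfl, rfl⟩ : o = o' ∧ k = j := by
          constructor <;> [exact (congrArg Prod.fst hkeq); exact (congrArg Prod.snd hkeq)]
        exact ⟨mem_ovl.mpr ⟨hk.1, hk.2⟩, rfl⟩
    rw [hf, block, Finset.card_image_of_injective _ (fun a b hab => by simpa using hab),
      Nat.card_Icc]
    omega

lemma reach {M M' : Multiset O} (h : M' ≤ M) :
    ∀ n S, phi S = n → InSS M M' S →
      S = ovl M' ∨ Relation.TransGen (IStep M) (ovl M') S := by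
  intro n
  induction n using Nat.strong_induction_on with
  | _ n ih =>
    intro S hphi hS
    by_cases hso : S = ovl M'
    · exact Or.inl hso
    right
    have hex : ∃ o i, 1 ≤ i ∧ (o, i) ∉ S ∧ (o, i+1) ∈ S := by
      by_contra hcon
      push_neg at hcon
      apply hso
      ext ⟨o, j⟩
      set T : Finset ℕ := (S.filter fun p => p.1 = o).image Prod.snd with hTdef
      have hmemT : ∀ k, k ∈ T ↔ (o, k) ∈ S := by
        intro k
        simp only [hTdef, Finset.mem_image, Finset.mem_filter]
        constructor
        · rintro ⟨⟨o', k'⟩, ⟨hm, rfl⟩, rfl⟩; exact hm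
        · intro hm; exact ⟨(o, k), ⟨hm, rfl⟩, rfl⟩
      have hcard : T.card = M'.count o := by
        rw [hTdef, Finset.card_image_of_injOn, hS.2 o]
        intro p hp q hq hpq
        simp only [Finset.coe_filter, Set.mem_setOf_eq] at hp hq
        exact Prod.ext (hp.2.trans hq.2.symm) hpq
      have h0 : 0 ∉ T := by
        rw [hmemT]
        intro hm
        have := mem_SMset.mp (hS.1 hm)
        omega
      have hcl : ∀ i, 1 ≤ i → i + 1 ∈ T → i ∈ T := by
        intro i hi hmem
        rw [hmemT] at hmem ⊢
        by_contra hni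
        exact hcon o i hi hni hmem
      have hTeq : T = Finset.Icc 1 (M'.count o) := hcard ▸ down_closed T h0 hcl
      rw [show ((o, j) ∈ S ↔ j ∈ T) from (hmemT j).symm, hTeq, mem_ovl, Finset.mem_Icc]
    obtain ⟨o, i, hi1, hnotin, hin⟩ := hex
    have hsubM : S ⊆ SMset M := hS.1
    have hiM : i ≤ M.count o := by
      have := mem_SMset.mp (hsubM hin); omega
    have hne : ((o, i) : O × ℕ) ≠ (o, i + 1) := by simp
    have hsub' : insert (o, i) (S.erase (o, i + 1)) ⊆ SMset M := by
      intro p hp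
      rw [Finset.mem_insert] at hp
      rcases hp with rfl | hp
      · exact mem_SMset.mpr ⟨hi1, hiM⟩
      · exact hsubM (Finset.mem_of_mem_erase hp)
    have hstep : IStep M (insert (o, i) (S.erase (o, i + 1))) S :=
      ⟨hsub', hsubM, o, i, sdiff_pair S _ _ hne hnotin hin, Finset.mem_insert_self _ _, hin⟩
    have hInSS' : InSS M M' (insert (o, i) (S.erase (o, i + 1))) := by
      refine ⟨hsub', fun o' => ?_⟩
      rw [← hS.2 o']
      by_cases ho : o = o'
      · subst ho
        have hfe : (insert (o, i) (S.erase (o, i + 1))).filter (fun p => p.1 = o) =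
            insert (o, i) ((S.filter fun p => p.1 = o).erase (o, i+1)) := by
          rw [Finset.filter_insert, if_pos rfl, Finset.filter_erase]
        have hmf : ((o, i+1) : O × ℕ) ∈ S.filter fun p => p.1 = o := by
          simp [hin]
        have hnmf : ((o, i) : O × ℕ) ∉ (S.filter fun p => p.1 = o).erase (o, i+1) := by
          simp [hnotin]
        have hpos : 1 ≤ (S.filter fun p => p.1 = o).card := Finset.card_pos.mpr ⟨_, hmf⟩
        rw [hfe, Finset.card_insert_of_notMem hnmf, Finset.card_erase_of_mem hmf]
        omega
      · have hnm : ((o, i+1) : O × ℕ) ∉ S.filter (fun p => p.1 = o') := by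
          simp only [Finset.mem_filter, not_and]
          exact fun _ hh => ho hh
        rw [Finset.filter_insert, if_neg (show ¬((o, i).1 = o') from ho), Finset.filter_erase,
          Finset.erase_eq_of_notMem hnm]
    have hphi' : phi S = phi (insert (o, i) (S.erase (o, i + 1))) + 1 := phi_step hstep
    rcases ih (phi (insert (o, i) (S.erase (o, i + 1)))) (by omega) _ rfl hInSS' with heq | htg
    · exact Relation.TransGen.single (heq ▸ hstep)
    · exact htg.tail hstep

end Stmt14Aux

/-- for every `M' ⊆ M`, `overline{M'}` is the unique maximal
element of `ss(M')` with respect to `>_i` (the transitive closure of `IStep`);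
moreover it dominates every other element of `ss(M')`. -/
theorem stmt_14 (M M' : Multiset O) (h : M' ≤ M) :
    InSS M M' (ovl M') ∧
    (∀ S, InSS M M' S → ¬ Relation.TransGen (IStep M) S (ovl M')) ∧
    (∀ S, InSS M M' S → S = ovl M' ∨ Relation.TransGen (IStep M) (ovl M') S) ∧
    (∀ S, InSS M M' S →
      (∀ S', InSS M M' S' → ¬ Relation.TransGen (IStep M) S' S) → S = ovl M') := by
  have hovl := Stmt14Aux.ovl_in_ss h
  have hreach := fun S hS => Stmt14Aux.reach h (Stmt14Aux.phi S) S rfl hS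
  refine ⟨hovl, ?_, hreach, ?_⟩
  · intro S hS htg
    have h1 := Stmt14Aux.phi_lt htg
    rcases hreach S hS with rfl | h2
    · omega
    · have := Stmt14Aux.phi_lt h2
      omega
  · intro S hS hmax
    by_contra hne
    rcases hreach S hS with rfl | h2
    · exact hne rfl
    · exact hmax (ovl M') hovl h2
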